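/- Let ε > 0 and let K₁, K₂ be symmetric positive definite n×n matrices. Then the matrix Ŝ = (ε/8)·K₂^{−1/2}·(−ε·I + (ε²·I + 16·K₂^{1/2} K₁ K₂^{1/2})^{1/2})·K₂^{−1/2} is symmetric positive definite and solves the continuous algebraic Riccati equation ε²·K₁ − ε²·S − 4·S K₂ S = 0; moreover K₁ − Ŝ is positive definite. -/

import Mathlib

open Matrix
open scoped Classical

noncomputable section

/-- The unique symmetric positive semidefinite square root of a positive
semidefinite matrix (junk value `0` otherwise). -/
def sqrtm {n : ℕ} (A : Matrix (Fin n) (Fin n) ℝ) : Matrix (Fin n) (Fin n) ℝ :=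
  if h : A.PosSemidef then
    h.1.eigenvectorUnitary.1 * diagonal ((↑) ∘ (√·) ∘ h.1.eigenvalues) *
      (star h.1.eigenvectorUnitary : Matrix (Fin n) (Fin n) ℝ)
  else 0

end

noncomputable section

def Matrix.PosSemidef.sqrt {n : ℕ} {A : Matrix (Fin n) (Fin n) ℝ} (h : A.PosSemidef) :
    Matrix (Fin n) (Fin n) ℝ :=
  h.1.eigenvectorUnitary.1 * diagonal ((↑) ∘ (√·) ∘ h.1.eigenvalues) *
    (star h.1.eigenvectorUnitary : Matrix (Fin n) (Fin n) ℝ)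

lemma Matrix.PosSemidef.posSemidef_sqrt {n : ℕ} {A : Matrix (Fin n) (Fin n) ℝ}
    (h : A.PosSemidef) : h.sqrt.PosSemidef := by
  unfold Matrix.PosSemidef.sqrt
  rw [Matrix.star_eq_conjTranspose]
  refine (PosSemidef.diagonal fun i => ?_).mul_mul_conjTranspose_same _
  simp [Real.sqrt_nonneg]

lemma Matrix.PosSemidef.sqrt_mul_self {n : ℕ} {A : Matrix (Fin n) (Fin n) ℝ}
    (h : A.PosSemidef) : h.sqrt * h.sqrt = A := by
  have hU : (star h.1.eigenvectorUnitary : Matrix (Fin n) (Fin n) ℝ) * h.1.eigenvectorUnitary.1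
      = 1 := Unitary.coe_star_mul_self _
  conv_rhs => rw [h.1.spectral_theorem, Unitary.conjStarAlgAut_apply]
  unfold Matrix.PosSemidef.sqrt
  simp only [Matrix.mul_assoc]
  rw [← Matrix.mul_assoc _ (h.1.eigenvectorUnitary.1), hU, Matrix.one_mul,
    ← Matrix.mul_assoc (diagonal _), diagonal_mul_diagonal]
  congr 3
  funext i
  simp [Real.mul_self_sqrt (h.eigenvalues_nonneg i)]

end

section aux

variable {n : ℕ}

lemma aux_posDef_conj {A B : Matrix (Fin n) (Fin n) ℝ} (hA : A.PosDef)
    (hB : IsUnit B) : (B * A * Bᴴ).PosDef := by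
  refine PosDef.of_dotProduct_mulVec_pos (isHermitian_mul_mul_conjTranspose B hA.1) (fun x hx => ?_)
  have hy : Bᴴ *ᵥ x ≠ 0 := by
    have hBH : IsUnit Bᴴ := by
      rw [Matrix.isUnit_iff_isUnit_det, Matrix.det_conjTranspose]
      simpa using (Matrix.isUnit_iff_isUnit_det B).mp hB
    have hinj : Function.Injective (Bᴴ).mulVec :=
      Matrix.mulVec_injective_iff_isUnit.mpr hBH
    intro h0
    exact hx (hinj (by simpa using h0))
  have h1 : (B * A * Bᴴ) *ᵥ x = B *ᵥ (A *ᵥ (Bᴴ *ᵥ x)) := by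
    simp [← Matrix.mulVec_mulVec, Matrix.mul_assoc]
  have hst : star x ᵥ* B = star (Bᴴ *ᵥ x) := by
    rw [star_mulVec, conjTranspose_conjTranspose]
  rw [h1, Matrix.dotProduct_mulVec, hst]
  exact hA.dotProduct_mulVec_pos hy

lemma aux_posDef_smul {A : Matrix (Fin n) (Fin n) ℝ} (hA : A.PosDef) {c : ℝ} (hc : 0 < c) :
    (c • A).PosDef := by
  have hherm : (c • A).IsHermitian := by
    show (c • A)ᴴ = c • A
    rw [conjTranspose_smul, hA.1.eq]
    simp
  refine PosDef.of_dotProduct_mulVec_pos hherm (fun x hx => ?_)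
  rw [Matrix.smul_mulVec, dotProduct_smul]
  exact mul_pos hc (hA.dotProduct_mulVec_pos hx)

lemma aux_posDef_of_posSemidef_isUnit {A : Matrix (Fin n) (Fin n) ℝ} (hA : A.PosSemidef)
    (h : IsUnit A) : A.PosDef := by
  refine PosDef.of_dotProduct_mulVec_pos hA.1 (fun x hx => ?_)
  rcases (hA.dotProduct_mulVec_nonneg x).lt_or_eq with hlt | heq
  · exact hlt
  · exfalso
    have h0 : A *ᵥ x = 0 := (hA.dotProduct_mulVec_zero_iff x).mp heq.symm
    have hinj : Function.Injective A.mulVec := Matrix.mulVec_injective_iff_isUnit.mpr h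
    exact hx (hinj (by simpa using h0))

/-- key lemma : if `M - ε² • 1` is positive definite then `√M - ε • 1` is positive definite. -/
lemma aux_sqrt_sub_posDef {M : Matrix (Fin n) (Fin n) ℝ} (hM : M.PosSemidef)
    {ε : ℝ} (hε : 0 < ε) (h : (M - ε ^ 2 • (1 : Matrix (Fin n) (Fin n) ℝ)).PosDef) :
    (hM.sqrt - ε • (1 : Matrix (Fin n) (Fin n) ℝ)).PosDef := by
  have heig : ∀ i, ε ^ 2 < hM.1.eigenvalues i := by
    intro i
    have hv := hM.1.mulVec_eigenvectorBasis i
    set v : Fin n → ℝ := ⇑(hM.1.eigenvectorBasis i) with hvdef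
    have hvne : v ≠ 0 := by simpa [hvdef] using hM.1.eigenvectorBasis.orthonormal.ne_zero i
    have hpos := h.dotProduct_mulVec_pos hvne
    have hMv : (M - ε ^ 2 • (1 : Matrix (Fin n) (Fin n) ℝ)) *ᵥ v
        = (hM.1.eigenvalues i - ε ^ 2) • v := by
      rw [Matrix.sub_mulVec, hv, Matrix.smul_mulVec, Matrix.one_mulVec, sub_smul]
    rw [hMv, dotProduct_smul, smul_eq_mul] at hpos
    have hvv : 0 < dotProduct (star v) v := dotProduct_star_self_pos_iff.mpr hvne
    nlinarith
  set U : Matrix (Fin n) (Fin n) ℝ := hM.1.eigenvectorUnitary.1 with hUdef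
  have hU1 : U * star U = 1 := mem_unitaryGroup_iff.mp hM.1.eigenvectorUnitary.2
  have hUu : IsUnit U := by
    rw [Matrix.isUnit_iff_isUnit_det]
    exact IsUnit.of_mul_eq_one (star U).det (by rw [← det_mul, hU1, det_one])
  have key : hM.sqrt - ε • (1 : Matrix (Fin n) (Fin n) ℝ)
      = U * diagonal (fun i => Real.sqrt (hM.1.eigenvalues i) - ε) * (star U) := by
    have hd : (diagonal (fun i => Real.sqrt (hM.1.eigenvalues i) - ε) : Matrix (Fin n) (Fin n) ℝ)
        = diagonal ((RCLike.ofReal : ℝ → ℝ) ∘ Real.sqrt ∘ hM.1.eigenvalues)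
          - ε • (1 : Matrix (Fin n) (Fin n) ℝ) := by
      rw [RCLike.ofReal_real_eq_id, Matrix.smul_one_eq_diagonal, ← diagonal_sub]
      simp [Function.comp]
    rw [hd, Matrix.mul_sub, Matrix.sub_mul, Matrix.PosSemidef.sqrt]
    congr 1
    rw [Matrix.mul_smul, Matrix.mul_one, Matrix.smul_mul, hU1]
  rw [key]
  have hdiag : (diagonal (fun i => Real.sqrt (hM.1.eigenvalues i) - ε) :
      Matrix (Fin n) (Fin n) ℝ).PosDef := by
    refine Matrix.PosDef.diagonal fun i => ?_
    have : ε < Real.sqrt (hM.1.eigenvalues i) := by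
      have := heig i
      have h1 : Real.sqrt (ε ^ 2) < Real.sqrt (hM.1.eigenvalues i) :=
        Real.sqrt_lt_sqrt (by positivity) this
      rwa [Real.sqrt_sq hε.le] at h1
    linarith
  simpa [Matrix.star_eq_conjTranspose] using aux_posDef_conj hdiag hUu

end aux

theorem stmt_18 {n : ℕ} (ε : ℝ) (hε : 0 < ε)
    (K₁ K₂ : Matrix (Fin n) (Fin n) ℝ) (hK₁ : K₁.PosDef) (hK₂ : K₂.PosDef)
    (S : Matrix (Fin n) (Fin n) ℝ)
    (hS : S = (ε / 8) • ((sqrtm K₂)⁻¹ *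
      (-(ε • (1 : Matrix (Fin n) (Fin n) ℝ)) +
        sqrtm (ε ^ 2 • (1 : Matrix (Fin n) (Fin n) ℝ) + (16 : ℝ) • (sqrtm K₂ * K₁ * sqrtm K₂))) *
      (sqrtm K₂)⁻¹)) :
    S.PosDef ∧ ε ^ 2 • K₁ - ε ^ 2 • S - (4 : ℝ) • (S * K₂ * S) = 0 ∧ (K₁ - S).PosDef := by
  -- set up Q = √K₂
  have hQdef : sqrtm K₂ = hK₂.posSemidef.sqrt := dif_pos hK₂.posSemidef
  set Q : Matrix (Fin n) (Fin n) ℝ := sqrtm K₂ with hQ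
  have hQpsd : Q.PosSemidef := hQdef ▸ hK₂.posSemidef.posSemidef_sqrt
  have hQQ : Q * Q = K₂ := by rw [hQdef]; exact hK₂.posSemidef.sqrt_mul_self
  have hQu : IsUnit Q := by
    have hd : IsUnit Q.det := by
      have : Q.det * Q.det = K₂.det := by rw [← hQQ, det_mul]
      have hpos : 0 < K₂.det := hK₂.det_pos
      exact isUnit_iff_ne_zero.mpr (fun h0 => by simp [h0] at this; nlinarith)
    exact (Matrix.isUnit_iff_isUnit_det Q).mpr hd
  have hQpos : Q.PosDef := aux_posDef_of_posSemidef_isUnit hQpsd hQu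
  have hQH : Qᴴ = Q := hQpsd.1
  have hiQ : Q⁻¹ * Q = 1 := Matrix.nonsing_inv_mul Q ((Matrix.isUnit_iff_isUnit_det Q).mp hQu)
  have hQi : Q * Q⁻¹ = 1 := Matrix.mul_nonsing_inv Q ((Matrix.isUnit_iff_isUnit_det Q).mp hQu)
  have hQiH : (Q⁻¹)ᴴ = Q⁻¹ := by rw [Matrix.conjTranspose_nonsing_inv, hQH]
  have hQiu : IsUnit (Q⁻¹) := Matrix.isUnit_nonsing_inv_iff.mpr hQu
  -- set up M and R = √M
  set M : Matrix (Fin n) (Fin n) ℝ :=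
    ε ^ 2 • (1 : Matrix (Fin n) (Fin n) ℝ) + (16 : ℝ) • (Q * K₁ * Q) with hMdef
  have hQKQ : (Q * K₁ * Q).PosDef := by
    have := aux_posDef_conj hK₁ hQu
    rwa [hQH] at this
  have hMpos : M.PosDef :=
    (aux_posDef_smul Matrix.PosDef.one (by positivity)).add (aux_posDef_smul hQKQ (by norm_num))
  have hRdef : sqrtm M = hMpos.posSemidef.sqrt := dif_pos hMpos.posSemidef
  set R : Matrix (Fin n) (Fin n) ℝ := sqrtm M with hR
  have hRR : R * R = M := by rw [hRdef]; exact hMpos.posSemidef.sqrt_mul_self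
  have hT : (R - ε • (1 : Matrix (Fin n) (Fin n) ℝ)).PosDef := by
    rw [hRdef]
    refine aux_sqrt_sub_posDef hMpos.posSemidef hε ?_
    have : M - ε ^ 2 • (1 : Matrix (Fin n) (Fin n) ℝ) = (16 : ℝ) • (Q * K₁ * Q) := by
      rw [hMdef]; abel
    rw [this]
    exact aux_posDef_smul hQKQ (by norm_num)
  set T : Matrix (Fin n) (Fin n) ℝ := R - ε • (1 : Matrix (Fin n) (Fin n) ℝ) with hTdef
  have hTH : Tᴴ = T := hT.1
  have hS' : S = (ε / 8) • (Q⁻¹ * T * Q⁻¹) := by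
    rw [hS, hTdef, neg_add_eq_sub]
  -- cancellation helpers
  have hc1 : ∀ X : Matrix (Fin n) (Fin n) ℝ, Q⁻¹ * (Q * X) = X := fun X => by
    rw [← Matrix.mul_assoc, hiQ, Matrix.one_mul]
  have hc2 : ∀ X : Matrix (Fin n) (Fin n) ℝ, Q * (Q⁻¹ * X) = X := fun X => by
    rw [← Matrix.mul_assoc, hQi, Matrix.one_mul]
  -- T² expansion
  have hTT : T * T = (16 : ℝ) • (Q * K₁ * Q) + (2 * ε ^ 2) • (1 : Matrix (Fin n) (Fin n) ℝ)
      - (2 * ε) • R := by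
    rw [hTdef]
    simp only [Matrix.sub_mul, Matrix.mul_sub, Matrix.smul_mul, Matrix.mul_smul,
      Matrix.one_mul, Matrix.mul_one, smul_smul, hRR, hMdef]
    module
  set A : Matrix (Fin n) (Fin n) ℝ := Q⁻¹ * R * Q⁻¹ with hA
  set B : Matrix (Fin n) (Fin n) ℝ := Q⁻¹ * Q⁻¹ with hB
  have hconj : Q⁻¹ * (T * T) * Q⁻¹
      = (16 : ℝ) • K₁ + (2 * ε ^ 2) • B - (2 * ε) • A := by
    rw [hTT, hA, hB]
    simp only [Matrix.mul_add, Matrix.add_mul, Matrix.mul_sub, Matrix.sub_mul,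
      Matrix.mul_smul, Matrix.smul_mul, Matrix.mul_one, Matrix.mul_assoc, hc1, hc2, hQi]
  have hs2 : S = (ε / 8) • A - (ε ^ 2 / 8) • B := by
    rw [hS', hTdef, hA, hB]
    simp only [Matrix.mul_sub, Matrix.sub_mul, Matrix.smul_mul, Matrix.mul_smul,
      Matrix.one_mul, Matrix.mul_one]
    module
  have hSKS : S * K₂ * S = (ε / 8 * (ε / 8)) • (Q⁻¹ * (T * T) * Q⁻¹) := by
    rw [hS', ← hQQ]
    simp only [Matrix.smul_mul, Matrix.mul_smul, smul_smul, Matrix.mul_assoc, hc1, hc2]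
  clear_value Q M R T A B
  refine ⟨?_, ?_, ?_⟩
  · rw [hS']
    refine aux_posDef_smul ?_ (by positivity)
    have := aux_posDef_conj hT hQiu
    rwa [hQiH] at this
  · rw [hSKS, hconj, hs2]
    module
  · have h3 : K₁ - S = Q⁻¹ * ((1 / 16 : ℝ) • (T * T)) * Q⁻¹ := by
      have : Q⁻¹ * ((1 / 16 : ℝ) • (T * T)) * Q⁻¹
          = (1 / 16 : ℝ) • (Q⁻¹ * (T * T) * Q⁻¹) := by
        simp [Matrix.smul_mul, Matrix.mul_smul]
      rw [this, hconj, hs2]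
      module
    have hTTpos : ((1 / 16 : ℝ) • (T * T)).PosDef := by
      refine aux_posDef_smul ?_ (by norm_num)
      have hT2 : T * 1 * Tᴴ = T * T := by rw [Matrix.mul_one, hTH]
      have := aux_posDef_conj Matrix.PosDef.one hT.isUnit
      rwa [hT2] at this
    have := aux_posDef_conj hTTpos hQiu
    rw [hQiH] at this
    rwa [h3]
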